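/- Extension Lemma: (i) every function f : B2^n → DM4 that is positive (i.e., monotone with respect to the componentwise truth order on B2^n) extends to a function in the clone BiLat; (ii) every positive f : B2^n → K3 extends to a function in ⟨DLat, n⟩; (iii) every positive f : B2^n → P3 extends to a function in ⟨DLat, b⟩; (iv) every positive f : B2^n → B2 extends to a function in DLat. -/

import Mathlib

set_option autoImplicit false

/-- The four truth values of the Belnap–Dunn logic. -/
inductive DM4 : Type
  | t
  | f
  | n
  | b
deriving DecidableEq

namespace DM4

/-- De Morgan negation. -/
def neg : DM4 → DM4
  | t => f
  | f => t
  | n => n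
  | b => b

/-- Conflation. -/
def conf : DM4 → DM4
  | t => t
  | f => f
  | n => b
  | b => n

/-- Meet in the truth order. -/
def meet : DM4 → DM4 → DM4
  | f, _ => f
  | _, f => f
  | t, y => y
  | x, t => x
  | n, n => n
  | b, b => b
  | n, b => f
  | b, n => f

/-- Join in the truth order. -/
def join : DM4 → DM4 → DM4
  | t, _ => t
  | _, t => t
  | f, y => y
  | x, f => x
  | n, n => n
  | b, b => b
  | n, b => t
  | b, n => t

/-- Meet in the information order (⊗). -/
def imeet : DM4 → DM4 → DM4
  | n, _ => n
  | _, n => n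
  | b, y => y
  | x, b => x
  | t, t => t
  | f, f => f
  | t, f => n
  | f, t => n

/-- Join in the information order (⊕). -/
def ijoin : DM4 → DM4 → DM4
  | b, _ => b
  | _, b => b
  | n, y => y
  | x, n => x
  | t, t => t
  | f, f => f
  | t, f => b
  | f, t => b

/-- The truth order: least element `f`, greatest element `t`, with `n`, `b` incomparable. -/
def tle (x y : DM4) : Prop := x = y ∨ x = f ∨ y = t

/-- The information order: least element `n`, greatest element `b`, with `t`, `f` incomparable. -/
def ile (x y : DM4) : Prop := x = y ∨ x = n ∨ y = b

/-- □: maps t to t and everything else to f. -/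
def box : DM4 → DM4
  | t => t
  | _ => f

/-- ◇: maps f to f and everything else to t. -/
def diamond : DM4 → DM4
  | f => f
  | _ => t

/-- Δ: maps t, b to t and n, f to f. -/
def delta : DM4 → DM4
  | t => t
  | b => t
  | _ => f

/-- ∇: maps t, n to t and b, f to f. -/
def nabla : DM4 → DM4
  | t => t
  | n => t
  | _ => f

/-- id_{b↦n}: maps b to n and fixes t, f, n. -/
def idbn : DM4 → DM4
  | b => n
  | x => x

/-- id_{n↦b}: maps n to b and fixes t, f, b. -/
def idnb : DM4 → DM4
  | n => b
  | x => x

/-- id_{n↦t}: maps n to t and fixes t, f, b. -/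
def idnt : DM4 → DM4
  | n => t
  | x => x

/-- id_{b↦t}: maps b to t and fixes t, f, n. -/
def idbt : DM4 → DM4
  | b => t
  | x => x

/-- t_{n↦n}: maps n to n and everything else to t. -/
def tnn : DM4 → DM4
  | n => n
  | _ => t

/-- t_{b↦b}: maps b to b and everything else to t. -/
def tbb : DM4 → DM4
  | b => b
  | _ => t

/-- The binary function pbp²₁. -/
def pbp1 : DM4 → DM4 → DM4
  | t, t => t | t, f => f | t, n => f | t, b => b
  | f, t => t | f, f => f | f, n => f | f, b => b
  | n, t => t | n, f => f | n, n => n | n, b => b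
  | b, t => b | b, f => f | b, n => f | b, b => b

/-- The binary function pbp²₂. -/
def pbp2 : DM4 → DM4 → DM4
  | t, t => t | t, f => f | t, n => n | t, b => f
  | f, t => t | f, f => f | f, n => n | f, b => f
  | n, t => n | n, f => f | n, n => n | n, b => f
  | b, t => t | b, f => f | b, n => n | b, b => b

/-- The binary function mnh²₁. -/
def mnh1 : DM4 → DM4 → DM4
  | t, t => f | t, f => f | t, n => n | t, b => b
  | f, t => f | f, f => f | f, n => n | f, b => b
  | n, t => f | n, f => f | n, n => n | n, b => f
  | b, t => f | b, f => f | b, n => n | b, b => b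

/-- The binary function mnh²₂. -/
def mnh2 : DM4 → DM4 → DM4
  | t, t => f | t, f => f | t, n => n | t, b => b
  | f, t => f | f, f => f | f, n => n | f, b => b
  | n, t => f | n, f => f | n, n => n | n, b => b
  | b, t => f | b, f => f | b, n => f | b, b => b

/-- The binary function mhnp². -/
def mhnp2 : DM4 → DM4 → DM4
  | t, _ => t
  | f, _ => t
  | n, b => f
  | n, _ => n
  | b, n => f
  | b, _ => b

/-- The binary function mnp²₁. -/
def mnp1 : DM4 → DM4 → DM4
  | t, b => b
  | t, _ => t
  | f, b => b
  | f, _ => t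
  | n, b => f
  | n, _ => n
  | b, n => f
  | b, _ => b

/-- The binary function mnp²₂. -/
def mnp2 : DM4 → DM4 → DM4
  | t, _ => t
  | f, _ => t
  | n, _ => n
  | b, n => f
  | b, _ => b

/-- The binary function mnp²₃. -/
def mnp3 : DM4 → DM4 → DM4
  | t, n => n
  | t, _ => t
  | f, n => n
  | f, _ => t
  | n, b => f
  | n, _ => n
  | b, n => f
  | b, _ => b

/-- The binary function mnp²₄. -/
def mnp4 : DM4 → DM4 → DM4
  | t, _ => t
  | f, _ => t
  | n, b => f
  | n, _ => n
  | b, _ => b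

/-- The ternary function mhnp³. -/
def mhnp3 : DM4 → DM4 → DM4 → DM4
  | _, t, _ => f
  | _, f, _ => f
  | t, n, _ => n
  | f, n, _ => f
  | b, n, _ => f
  | n, n, b => f
  | n, n, _ => n
  | t, b, _ => b
  | f, b, _ => f
  | n, b, _ => f
  | b, b, n => f
  | b, b, _ => b

/-- The set of designated values. -/
def Des : Set DM4 := {t, b}

/-- Designatedness as a Boolean predicate. -/
def des : DM4 → Bool
  | t => true
  | b => true
  | _ => false

/-- The protoimplication →_{t-max}. -/
def tmax (x y : DM4) : DM4 :=
  match des x, des y with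
  | true, false => n
  | _, _ => t

/-- The protoimplication →_{i-max}. -/
def imax (x y : DM4) : DM4 :=
  match des x, des y with
  | true, false => f
  | _, _ => b

/-- The protoimplication ↔_{t-min}. -/
def tmin (x y : DM4) : DM4 := if x = y then b else f

/-- The protoimplication ↔_{i-min}. -/
def imin (x y : DM4) : DM4 := if x = y then t else n

/-- A binary operation is a protoimplication if it satisfies Reflexivity and Modus Ponens
with respect to the designated set {t, b}. -/
def IsProtoimplication (r : DM4 → DM4 → DM4) : Prop :=
  (∀ a : DM4, r a a ∈ Des) ∧ ∀ a c : DM4, a ∈ Des → r a c ∈ Des → c ∈ Des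

/-- `DMFun k` is the type of De Morgan functions of arity `k + 1` (arities are positive). -/
abbrev DMFun (k : ℕ) : Type := (Fin (k + 1) → DM4) → DM4

/-- Membership in the clone generated by the family of operations `S`
(`S k` is the set of generators of arity `k + 1`). -/
inductive InClone (S : ∀ k : ℕ, Set (DMFun k)) : ∀ k : ℕ, DMFun k → Prop
  | base {k : ℕ} {g : DMFun k} : g ∈ S k → InClone S k g
  | proj {k : ℕ} (i : Fin (k + 1)) : InClone S k (fun x => x i)
  | comp {k m : ℕ} {g : DMFun m} {h : Fin (m + 1) → DMFun k} :
      InClone S m g → (∀ i, InClone S k (h i)) →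
      InClone S k (fun x => g (fun i => h i x))

/-- A family of sets of De Morgan functions is a clone if it contains all projections
and is closed under composition. -/
structure IsClone (C : ∀ k : ℕ, Set (DMFun k)) : Prop where
  proj : ∀ (k : ℕ) (i : Fin (k + 1)), (fun x => x i) ∈ C k
  comp : ∀ (k m : ℕ) (g : DMFun m) (h : Fin (m + 1) → DMFun k),
      g ∈ C m → (∀ i, h i ∈ C k) → (fun x => g (fun i => h i x)) ∈ C k

/-- The generating family consisting of a single unary operation. -/
def op1 (g : DM4 → DM4) : ∀ k : ℕ, Set (DMFun k)
  | 0 => {fun x => g (x 0)}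
  | _ + 1 => ∅

/-- The generating family consisting of a single binary operation. -/
def op2 (g : DM4 → DM4 → DM4) : ∀ k : ℕ, Set (DMFun k)
  | 1 => {fun x => g (x 0) (x 1)}
  | _ => ∅

/-- The generating family consisting of a single ternary operation. -/
def op3 (g : DM4 → DM4 → DM4 → DM4) : ∀ k : ℕ, Set (DMFun k)
  | 2 => {fun x => g (x 0) (x 1) (x 2)}
  | _ => ∅

/-- Union of two families of operations. -/
def funion (S T : ∀ k : ℕ, Set (DMFun k)) : ∀ k : ℕ, Set (DMFun k) := fun k => S k ∪ T k

infixr:65 " ⊹ " => funion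

/-- The generators of DLat: ∧, ∨, t, f (constants as unary constant functions). -/
def DLatGen : ∀ k : ℕ, Set (DMFun k) :=
  op2 meet ⊹ op2 join ⊹ op1 (fun _ => t) ⊹ op1 (fun _ => f)

/-- The generators of DMA: ∧, ∨, t, f, −. -/
def DMAGen : ∀ k : ℕ, Set (DMFun k) := DLatGen ⊹ op1 neg

/-- The generators of BiLat: ∧, ∨, t, f, ⊗, ⊕, n, b. -/
def BiLatGen : ∀ k : ℕ, Set (DMFun k) :=
  DLatGen ⊹ op2 imeet ⊹ op2 ijoin ⊹ op1 (fun _ => n) ⊹ op1 (fun _ => b)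

/-- A De Morgan function is harmonious if it commutes with conflation. -/
def Harmonious {k : ℕ} (g : DMFun k) : Prop :=
  ∀ x : Fin (k + 1) → DM4, g (fun i => conf (x i)) = conf (g x)

/-- A De Morgan function is positive if it is monotone in the componentwise truth order. -/
def Positive {k : ℕ} (g : DMFun k) : Prop :=
  ∀ x y : Fin (k + 1) → DM4, (∀ i, tle (x i) (y i)) → tle (g x) (g y)

/-- A De Morgan function is persistent if it is monotone in the componentwise
information order. -/
def Persistent {k : ℕ} (g : DMFun k) : Prop :=
  ∀ x y : Fin (k + 1) → DM4, (∀ i, ile (x i) (y i)) → ile (g x) (g y)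

/-- A De Morgan function preserves a subset X of DM4 if it maps tuples from X into X. -/
def Preserves {k : ℕ} (g : DMFun k) (X : Set DM4) : Prop :=
  ∀ x : Fin (k + 1) → DM4, (∀ i, x i ∈ X) → g x ∈ X

def B2 : Set DM4 := {t, f}
def K3 : Set DM4 := {t, n, f}
def P3 : Set DM4 := {t, b, f}

/-- A unary operation as a De Morgan function. -/
def toF1 (g : DM4 → DM4) : DMFun 0 := fun x => g (x 0)

/-- A binary operation as a De Morgan function. -/
def toF2 (g : DM4 → DM4 → DM4) : DMFun 1 := fun x => g (x 0) (x 1)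

/-- A ternary operation as a De Morgan function. -/
def toF3 (g : DM4 → DM4 → DM4 → DM4) : DMFun 2 := fun x => g (x 0) (x 1) (x 2)

/-- The clone generated by a family of operations, as a family of sets. -/
def CloneOf (S : ∀ k : ℕ, Set (DMFun k)) : ∀ k : ℕ, Set (DMFun k) :=
  fun k => {g | InClone S k g}

/-- Inclusion of families of operations. -/
def CloneLE (C D : ∀ k : ℕ, Set (DMFun k)) : Prop := ∀ k : ℕ, C k ⊆ D k


/- ### Auxiliary lemmas for the Extension Lemma -/

instance : Fintype DM4 :=
  ⟨⟨(([t, f, n, b] : List DM4) : Multiset DM4), by decide⟩, fun x => by cases x <;> decide⟩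

instance (x y : DM4) : Decidable (tle x y) := by unfold tle; infer_instance

lemma tle_refl' : ∀ a : DM4, tle a a := by decide

lemma tle_f_t : tle f t := by decide

lemma join_absorb : ∀ a c : DM4, tle c a → join a c = a := by decide

lemma meet_t' : ∀ a : DM4, meet t a = a := by decide

lemma meet_f' : ∀ a : DM4, meet f a = f := by decide

lemma join_f' : ∀ a : DM4, join f a = a := by decide

lemma t_mem_B2 : (t : DM4) ∈ B2 := Or.inl rfl
lemma f_mem_B2 : (f : DM4) ∈ B2 := Or.inr rfl

lemma clone_mono {S T : ∀ k : ℕ, Set (DMFun k)} (hST : ∀ k, S k ⊆ T k)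
    {k : ℕ} {g : DMFun k} (hg : InClone S k g) : InClone T k g := by
  induction hg with
  | base hb => exact .base (hST _ hb)
  | proj i => exact .proj i
  | comp hg hh ihg ihh => exact .comp ihg ihh

lemma const_clone {S : ∀ k : ℕ, Set (DMFun k)} {k : ℕ} {c : DM4}
    (h : InClone S 0 (toF1 (fun _ => c))) : InClone S k (fun _ => c) :=
  InClone.comp (h := fun _ : Fin 1 => (fun x => x 0 : DMFun k)) h (fun _ => .proj 0)

lemma binop_clone {S : ∀ k : ℕ, Set (DMFun k)} {k : ℕ} {op : DM4 → DM4 → DM4}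
    {g1 g2 : DMFun k} (hop : InClone S 1 (toF2 op))
    (h1 : InClone S k g1) (h2 : InClone S k g2) :
    InClone S k (fun x => op (g1 x) (g2 x)) :=
  InClone.comp (h := Fin.cons g1 (fun _ => g2)) hop
    (fun i => by
      refine Fin.cases ?_ ?_ i
      · exact h1
      · intro j; exact h2)

lemma castSucc_clone {S : ∀ k : ℕ, Set (DMFun k)} {k : ℕ} {g : DMFun k}
    (h : InClone S k g) :
    InClone S (k + 1) (fun x => g (fun i => x i.castSucc)) :=
  InClone.comp (h := fun i : Fin (k + 1) => (fun x => x i.castSucc : DMFun (k + 1)))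
    h (fun i => .proj i.castSucc)

/-- Main auxiliary: monotone DNF construction, parameterized over allowed constants. -/
theorem ext_aux (S : ∀ k : ℕ, Set (DMFun k)) (C : Set DM4)
    (hmeet : InClone S 1 (toF2 meet)) (hjoin : InClone S 1 (toF2 join))
    (hconst : ∀ c ∈ C, InClone S 0 (toF1 (fun _ => c))) :
    ∀ (k : ℕ) (F : (Fin (k + 1) → {a : DM4 // a ∈ B2}) → DM4),
      (∀ x, F x ∈ C) →
      (∀ x y, (∀ i, tle (x i).1 (y i).1) → tle (F x) (F y)) →
      ∃ g : DMFun k, InClone S k g ∧ ∀ x, g (fun i => (x i).1) = F x := by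
  intro k
  induction k with
  | zero =>
    intro F hC hmono
    set a := F (fun _ => ⟨t, t_mem_B2⟩) with ha
    set c := F (fun _ => ⟨f, f_mem_B2⟩) with hc
    refine ⟨fun x => join (meet (x 0) a) c, ?_, ?_⟩
    · exact binop_clone hjoin
        (binop_clone hmeet (.proj 0) (const_clone (hconst a (hC _))))
        (const_clone (hconst c (hC _)))
    · intro x
      have hle : tle c a := hmono _ _ (fun i => tle_f_t)
      rcases (x 0).2 with h | h
      · have hx : x = fun _ => ⟨t, t_mem_B2⟩ := by
          funext i
          have : i = 0 := Fin.ext (by omega)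
          rw [this]; exact Subtype.ext h
        simp only [hx]
        show join (meet t a) c = a
        rw [meet_t', join_absorb _ _ hle]
      · have hx : x = fun _ => ⟨f, f_mem_B2⟩ := by
          funext i
          have : i = 0 := Fin.ext (by omega)
          rw [this]; exact Subtype.ext h
        simp only [hx]
        show join (meet f a) c = c
        rw [meet_f', join_f']
  | succ m ih =>
    intro F hC hmono
    set Ft : (Fin (m + 1) → {a : DM4 // a ∈ B2}) → DM4 :=
      fun x => F (Fin.snoc x ⟨t, t_mem_B2⟩) with hFt
    set Ff : (Fin (m + 1) → {a : DM4 // a ∈ B2}) → DM4 :=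
      fun x => F (Fin.snoc x ⟨f, f_mem_B2⟩) with hFf
    have monot : ∀ (v : {a : DM4 // a ∈ B2}),
        ∀ x y, (∀ i, tle (x i).1 (y i).1) →
          tle (F (Fin.snoc x v)) (F (Fin.snoc y v)) := by
      intro v x y h
      apply hmono
      intro i
      refine Fin.lastCases ?_ ?_ i
      · simp only [Fin.snoc_last]; exact tle_refl' _
      · intro j; simp only [Fin.snoc_castSucc]; exact h j
    obtain ⟨gt, hgt, hgtv⟩ := ih Ft (fun x => hC _) (monot _)
    obtain ⟨gf, hgf, hgfv⟩ := ih Ff (fun x => hC _) (monot _)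
    refine ⟨fun x => join (meet (x (Fin.last (m + 1))) (gt (fun i => x i.castSucc)))
        (gf (fun i => x i.castSucc)), ?_, ?_⟩
    · exact binop_clone hjoin
        (binop_clone hmeet (.proj (Fin.last (m + 1))) (castSucc_clone hgt))
        (castSucc_clone hgf)
    · intro x
      set x' : Fin (m + 1) → {a : DM4 // a ∈ B2} := fun i => x i.castSucc with hx'
      have e1 : gt (fun i => (x i.castSucc).1) = Ft x' := hgtv x'
      have e2 : gf (fun i => (x i.castSucc).1) = Ff x' := hgfv x'
      have hle : tle (Ff x') (Ft x') := by
        apply hmono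
        intro i
        refine Fin.lastCases ?_ ?_ i
        · simp only [Fin.snoc_last]; exact tle_f_t
        · intro j; simp only [Fin.snoc_castSucc]; exact tle_refl' _
      show join (meet (x (Fin.last (m + 1))).1 (gt (fun i => (x i.castSucc).1)))
          (gf (fun i => (x i.castSucc).1)) = F x
      rw [e1, e2]
      rcases (x (Fin.last (m + 1))).2 with h | h
      · have hx : x = Fin.snoc x' ⟨t, t_mem_B2⟩ := by
          funext i
          refine Fin.lastCases ?_ ?_ i
          · rw [Fin.snoc_last]; exact Subtype.ext h
          · intro j; rw [Fin.snoc_castSucc]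
        rw [h, meet_t', join_absorb _ _ hle, hFt]
        rw [hx]
      · have hx : x = Fin.snoc x' ⟨f, f_mem_B2⟩ := by
          funext i
          refine Fin.lastCases ?_ ?_ i
          · rw [Fin.snoc_last]; exact Subtype.ext h
          · intro j; rw [Fin.snoc_castSucc]
        rw [h, meet_f', join_f', hFf]
        rw [hx]

lemma meet_in_DLat : InClone DLatGen 1 (toF2 meet) := .base (Or.inl rfl)

lemma join_in_DLat : InClone DLatGen 1 (toF2 join) := .base (Or.inr (Or.inl rfl))

lemma const_t_in_DLat : InClone DLatGen 0 (toF1 (fun _ => t)) :=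
  .base (Or.inr (Or.inr (Or.inl rfl)))

lemma const_f_in_DLat : InClone DLatGen 0 (toF1 (fun _ => f)) :=
  .base (Or.inr (Or.inr (Or.inr rfl)))

lemma DLat_le_union (T : ∀ k : ℕ, Set (DMFun k)) : ∀ k, DLatGen k ⊆ (DLatGen ⊹ T) k :=
  fun k => Set.subset_union_left

lemma DLat_le_BiLat : ∀ k, DLatGen k ⊆ BiLatGen k :=
  fun k => Set.subset_union_left

/-- Extension Lemma. Every positive function from B2-tuples to DM4
(resp. into K3, P3, B2) extends to a function in BiLat (resp. ⟨DLat, n⟩, ⟨DLat, b⟩, DLat). -/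
theorem extension_lemma (k : ℕ) :
    (∀ F : (Fin (k + 1) → {a : DM4 // a ∈ B2}) → DM4,
      (∀ x y, (∀ i, tle (x i).1 (y i).1) → tle (F x) (F y)) →
      ∃ g : DMFun k, InClone BiLatGen k g ∧ ∀ x, g (fun i => (x i).1) = F x) ∧
    (∀ F : (Fin (k + 1) → {a : DM4 // a ∈ B2}) → DM4,
      (∀ x, F x ∈ K3) →
      (∀ x y, (∀ i, tle (x i).1 (y i).1) → tle (F x) (F y)) →
      ∃ g : DMFun k, InClone (DLatGen ⊹ op1 (fun _ => n)) k g ∧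
        ∀ x, g (fun i => (x i).1) = F x) ∧
    (∀ F : (Fin (k + 1) → {a : DM4 // a ∈ B2}) → DM4,
      (∀ x, F x ∈ P3) →
      (∀ x y, (∀ i, tle (x i).1 (y i).1) → tle (F x) (F y)) →
      ∃ g : DMFun k, InClone (DLatGen ⊹ op1 (fun _ => b)) k g ∧
        ∀ x, g (fun i => (x i).1) = F x) ∧
    (∀ F : (Fin (k + 1) → {a : DM4 // a ∈ B2}) → DM4,
      (∀ x, F x ∈ B2) →
      (∀ x y, (∀ i, tle (x i).1 (y i).1) → tle (F x) (F y)) →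
      ∃ g : DMFun k, InClone DLatGen k g ∧ ∀ x, g (fun i => (x i).1) = F x) := by
  refine ⟨?_, ?_, ?_, ?_⟩
  · intro F hmono
    refine ext_aux BiLatGen Set.univ
      (clone_mono DLat_le_BiLat meet_in_DLat)
      (clone_mono DLat_le_BiLat join_in_DLat)
      ?_ k F (fun _ => trivial) hmono
    intro c _
    cases c with
    | t => exact clone_mono DLat_le_BiLat const_t_in_DLat
    | f => exact clone_mono DLat_le_BiLat const_f_in_DLat
    | n =>
      refine .base ?_
      exact Or.inr (Or.inr (Or.inr (Or.inl rfl)))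
    | b =>
      refine .base ?_
      exact Or.inr (Or.inr (Or.inr (Or.inr rfl)))
  · intro F hK hmono
    refine ext_aux _ K3
      (clone_mono (DLat_le_union _) meet_in_DLat)
      (clone_mono (DLat_le_union _) join_in_DLat)
      ?_ k F hK hmono
    intro c hc
    rcases hc with h | h | h
    · subst h; exact clone_mono (DLat_le_union _) const_t_in_DLat
    · subst h; exact .base (Or.inr rfl)
    · rw [Set.mem_singleton_iff] at h
      subst h; exact clone_mono (DLat_le_union _) const_f_in_DLat
  · intro F hP hmono
    refine ext_aux _ P3
      (clone_mono (DLat_le_union _) meet_in_DLat)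
      (clone_mono (DLat_le_union _) join_in_DLat)
      ?_ k F hP hmono
    intro c hc
    rcases hc with h | h | h
    · subst h; exact clone_mono (DLat_le_union _) const_t_in_DLat
    · subst h; exact .base (Or.inr rfl)
    · rw [Set.mem_singleton_iff] at h
      subst h; exact clone_mono (DLat_le_union _) const_f_in_DLat
  · intro F hB hmono
    refine ext_aux _ B2 meet_in_DLat join_in_DLat ?_ k F hB hmono
    intro c hc
    rcases hc with h | h
    · subst h; exact const_t_in_DLat
    · rw [Set.mem_singleton_iff] at h
      subst h; exact const_f_in_DLat

end DM4
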